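/- With the two-soliton collision setup, the inverse collision law holds: given u₁ and u_{{1},2} (with ‖u₁‖ = ‖u_{{1},2}‖ = 1), one recovers u₂ by u₂ = e^{-φ₁₂}·((ζ₁-ζ₂*)/(ζ₁*-ζ₂*))·(u_{{1},2} + ((ζ₁-ζ₁*)/(ζ₁*-ζ₂*))·⟨u_{{1},2},u₁⟩·u₁), where e^{-2φ₁₂} = |（ζ₁-ζ₂)/(ζ₁-ζ₂*)|²·(1 - ((ζ₁-ζ₁*)(ζ₂-ζ₂*)/|ζ₁-ζ₂|²)·|⟨u₁,u_{{1},2}⟩|²)^{-1}. That is, substituting the forward definition u_{{1},2} = e^{φ₁₂}((ζ₁*-ζ₂*)/(ζ₁-ζ₂*))(u₂ - ((ζ₁-ζ₁*)/(ζ₁-ζ₂*))⟨u₂,u₁⟩u₁) into the inverse formula returns u₂. -/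

import Mathlib

open Complex Matrix BigOperators

noncomputable section

/-- Hermitian inner product on ℂ^m, linear in the first slot. -/
def herm {m : ℕ} (u v : Fin m → ℂ) : ℂ := ∑ a, u a * (starRingEnd ℂ) (v a)

lemma herm_comb {m : ℕ} (K L : ℂ) (u v w : Fin m → ℂ) :
    herm (fun a => K * (u a - L * v a)) w = K * herm u w - K * L * herm v w := by
  simp only [herm, ← Finset.sum_sub_distrib, Finset.mul_sum]
  congr 1; funext a; ring

lemma herm_conj {m : ℕ} (u v : Fin m → ℂ) :
    herm u v = (starRingEnd ℂ) (herm v u) := by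
  simp [herm, map_sum, mul_comm]

lemma herm_cs {m : ℕ} (u v : Fin m → ℂ) (hu : herm u u = 1) (hv : herm v v = 1) :
    ‖herm u v‖ ≤ 1 := by
  have key : ∀ x y : Fin m → ℂ, herm x y =
      @inner ℂ _ _ ((WithLp.equiv 2 (Fin m → ℂ)).symm y) ((WithLp.equiv 2 (Fin m → ℂ)).symm x) := by
    intro x y
    simp [herm, PiLp.inner_apply, RCLike.inner_apply, mul_comm]
  have hnorm : ∀ x : Fin m → ℂ, herm x x = 1 → ‖(WithLp.equiv 2 (Fin m → ℂ)).symm x‖ = 1 := by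
    intro x hx
    rw [key] at hx
    rw [inner_self_eq_norm_sq_to_K] at hx
    have : (‖(WithLp.equiv 2 (Fin m → ℂ)).symm x‖:ℝ)^2 = 1 := by
      exact_mod_cast congrArg Complex.re hx
    nlinarith [norm_nonneg ((WithLp.equiv 2 (Fin m → ℂ)).symm x)]
  have h1 := hnorm u hu
  have h2 := hnorm v hv
  have := norm_inner_le_norm (𝕜 := ℂ) ((WithLp.equiv 2 (Fin m → ℂ)).symm v)
      ((WithLp.equiv 2 (Fin m → ℂ)).symm u)
  rw [h1, h2] at this
  calc ‖herm u v‖ = ‖herm u v‖ := rfl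
    _ ≤ 1 := by rw [key]; simpa using this

/-- The pure algebraic identity behind the inverse collision law. -/
lemma inv_alg (β γ α c x y t : ℂ) (hβ : β ≠ 0) (hγ : γ ≠ 0) (ht : t ≠ 0) :
    x = t * (β / γ) * (t⁻¹ * (γ / β) * (x - α / β * c * y) +
      α / γ * (t⁻¹ * (γ / β) * (γ / β) * c) * y) := by
  field_simp
  ring

theorem stmt13 {m : ℕ} (ζ₁ ζ₂ : ℂ) (h1 : 0 < ζ₁.im) (h2 : 0 < ζ₂.im) (hne : ζ₁ ≠ ζ₂)
    (u₁ u₂ : Fin m → ℂ) (hu1 : herm u₁ u₁ = 1) (hu2 : herm u₂ u₂ = 1) :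
    -- forward collision law
    let eneg : ℝ := (‖(ζ₁ - ζ₂) / (ζ₁ - (starRingEnd ℂ) ζ₂)‖)^2 *
      (1 + ((ζ₁ - (starRingEnd ℂ) ζ₁) * (ζ₂ - (starRingEnd ℂ) ζ₂)).re /
        (‖ζ₁ - (starRingEnd ℂ) ζ₂‖)^2 * (‖herm u₁ u₂‖)^2)
    let u12 : Fin m → ℂ := fun a =>
      (((Real.sqrt eneg)⁻¹ : ℝ) : ℂ) *
        (((starRingEnd ℂ) ζ₁ - (starRingEnd ℂ) ζ₂) / (ζ₁ - (starRingEnd ℂ) ζ₂)) *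
        (u₂ a - (ζ₁ - (starRingEnd ℂ) ζ₁) / (ζ₁ - (starRingEnd ℂ) ζ₂) *
          herm u₂ u₁ * u₁ a)
    -- e^{-2φ₁₂} expressed via u₁ and u_{{1},2} (the inverse form)
    let enegInv : ℝ := (‖(ζ₁ - ζ₂) / (ζ₁ - (starRingEnd ℂ) ζ₂)‖)^2 *
      (1 - ((ζ₁ - (starRingEnd ℂ) ζ₁) * (ζ₂ - (starRingEnd ℂ) ζ₂)).re /
        (‖ζ₁ - ζ₂‖)^2 * (‖herm u₁ u12‖)^2)⁻¹
    -- inverse collision law recovers u₂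
    u₂ = fun a =>
      ((Real.sqrt enegInv : ℝ) : ℂ) *
        ((ζ₁ - (starRingEnd ℂ) ζ₂) / ((starRingEnd ℂ) ζ₁ - (starRingEnd ℂ) ζ₂)) *
        (u12 a + (ζ₁ - (starRingEnd ℂ) ζ₁) / ((starRingEnd ℂ) ζ₁ - (starRingEnd ℂ) ζ₂) *
          herm u12 u₁ * u₁ a) := by
  intro eneg u12 enegInv
  have hδ : ζ₁ - ζ₂ ≠ 0 := sub_ne_zero.mpr hne
  have hβ : ζ₁ - (starRingEnd ℂ) ζ₂ ≠ 0 := by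
    intro h
    have := congrArg Complex.im h
    simp [Complex.sub_im, Complex.conj_im] at this
    linarith
  have hγconj : (starRingEnd ℂ) ζ₁ - (starRingEnd ℂ) ζ₂ = (starRingEnd ℂ) (ζ₁ - ζ₂) := by
    simp [map_sub]
  have hγ : (starRingEnd ℂ) ζ₁ - (starRingEnd ℂ) ζ₂ ≠ 0 := by
    rw [hγconj]
    intro h
    exact hδ (by simpa using congrArg (starRingEnd ℂ) h)
  set B := ‖ζ₁ - (starRingEnd ℂ) ζ₂‖ with hBdef
  set D := ‖ζ₁ - ζ₂‖ with hDdef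
  have habsγ : ‖(starRingEnd ℂ) ζ₁ - (starRingEnd ℂ) ζ₂‖ = D := by
    rw [hγconj, hDdef]; exact Complex.norm_conj _
  have hBpos : 0 < B := norm_pos_iff.mpr hβ
  have hDpos : 0 < D := norm_pos_iff.mpr hδ
  set r := ‖herm u₁ u₂‖ with hrdef
  have hr1 : r ≤ 1 := herm_cs u₁ u₂ hu1 hu2
  have hr0 : 0 ≤ r := norm_nonneg _
  have hαre : ((ζ₁ - (starRingEnd ℂ) ζ₁) * (ζ₂ - (starRingEnd ℂ) ζ₂)).re
      = -(4 * ζ₁.im * ζ₂.im) := by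
    simp [Complex.mul_re, Complex.sub_re, Complex.sub_im, Complex.conj_re, Complex.conj_im]
    ring
  have hB2 : B^2 = D^2 + 4 * ζ₁.im * ζ₂.im := by
    rw [hBdef, hDdef, Complex.sq_norm, Complex.sq_norm]
    simp [Complex.normSq_apply, Complex.sub_re, Complex.sub_im,
      Complex.conj_re, Complex.conj_im]
    ring
  have hy : (0:ℝ) < 4 * ζ₁.im * ζ₂.im := by positivity
  have hr2 : r^2 ≤ 1 := by nlinarith [mul_nonneg (sub_nonneg.mpr hr1) (by linarith : (0:ℝ) ≤ 1 + r)]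
  have h4 : 4 * ζ₁.im * ζ₂.im * r^2 ≤ 4 * ζ₁.im * ζ₂.im := by
    nlinarith [mul_nonneg hy.le (sub_nonneg.mpr hr2)]
  have hden : 0 < B^2 - 4 * ζ₁.im * ζ₂.im * r^2 := by
    have hD2 : 0 < D^2 := pow_pos hDpos 2
    linarith
  -- closed form for eneg
  have heneg : eneg = D^2 / B^4 * (B^2 - 4 * ζ₁.im * ζ₂.im * r^2) := by
    show (‖(ζ₁ - ζ₂) / (ζ₁ - (starRingEnd ℂ) ζ₂)‖)^2 *
      (1 + ((ζ₁ - (starRingEnd ℂ) ζ₁) * (ζ₂ - (starRingEnd ℂ) ζ₂)).re / B^2 * r^2) = _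
    rw [norm_div, hαre, ← hBdef, ← hDdef]
    field_simp
    ring
  have hEpos : 0 < eneg := by
    rw [heneg]
    exact mul_pos (by positivity) hden
  set s := Real.sqrt eneg with hsdef
  have hspos : 0 < s := Real.sqrt_pos.mpr hEpos
  have hs2 : s^2 = eneg := Real.sq_sqrt hEpos.le
  -- herm u12 u₁
  set K : ℂ := (((s)⁻¹ : ℝ) : ℂ) *
      (((starRingEnd ℂ) ζ₁ - (starRingEnd ℂ) ζ₂) / (ζ₁ - (starRingEnd ℂ) ζ₂)) with hKdef
  set L : ℂ := (ζ₁ - (starRingEnd ℂ) ζ₁) / (ζ₁ - (starRingEnd ℂ) ζ₂) * herm u₂ u₁ with hLdef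
  have hu12eq : u12 = fun a => K * (u₂ a - L * u₁ a) := by
    funext a
    show K * (u₂ a - _ * herm u₂ u₁ * u₁ a) = _
    rw [hLdef]
  have hc12 : herm u12 u₁ = K *
      (((starRingEnd ℂ) ζ₁ - (starRingEnd ℂ) ζ₂) / (ζ₁ - (starRingEnd ℂ) ζ₂)) * herm u₂ u₁ := by
    rw [hu12eq, herm_comb, hu1, hLdef]
    field_simp
    ring
  -- abs of herm u₁ u12
  have habs12 : ‖herm u₁ u12‖ = s⁻¹ * (D^2 / B^2) * ‖herm u₂ u₁‖ := by
    rw [herm_conj u₁ u12, Complex.norm_conj, hc12, hKdef]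
    simp only [norm_mul, norm_div, Complex.norm_real, Real.norm_eq_abs, habsγ, ← hBdef]
    rw [abs_of_pos (inv_pos.mpr hspos)]
    ring
  have habs21 : ‖herm u₂ u₁‖ = r := by
    rw [herm_conj u₂ u₁, Complex.norm_conj, hrdef]
  -- enegInv = eneg
  have henegInv : enegInv = eneg := by
    show (‖(ζ₁ - ζ₂) / (ζ₁ - (starRingEnd ℂ) ζ₂)‖)^2 *
      (1 - ((ζ₁ - (starRingEnd ℂ) ζ₁) * (ζ₂ - (starRingEnd ℂ) ζ₂)).re / D^2
        * (‖herm u₁ u12‖)^2)⁻¹ = eneg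
    rw [norm_div, hαre, habs12, habs21, ← hBdef, ← hDdef]
    have hsinv : (s⁻¹)^2 = B^4 / (D^2 * (B^2 - 4 * ζ₁.im * ζ₂.im * r^2)) := by
      rw [inv_pow, hs2, heneg]
      field_simp
    have hkey : 1 - -(4 * ζ₁.im * ζ₂.im) / D^2 * (s⁻¹ * (D^2 / B^2) * r)^2
        = B^2 / (B^2 - 4 * ζ₁.im * ζ₂.im * r^2) := by
      rw [mul_pow, mul_pow, hsinv]
      field_simp
      ring
    rw [hkey, inv_div, heneg, div_pow]
    field_simp
  have hsqrtInv : Real.sqrt enegInv = s := by rw [henegInv]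
  -- conclude
  funext a
  show u₂ a = ((Real.sqrt enegInv : ℝ) : ℂ) *
      ((ζ₁ - (starRingEnd ℂ) ζ₂) / ((starRingEnd ℂ) ζ₁ - (starRingEnd ℂ) ζ₂)) *
      (u12 a + (ζ₁ - (starRingEnd ℂ) ζ₁) / ((starRingEnd ℂ) ζ₁ - (starRingEnd ℂ) ζ₂) *
        herm u12 u₁ * u₁ a)
  rw [hsqrtInv, hc12, hu12eq, hKdef, hLdef]
  have hsC : ((s : ℝ) : ℂ) ≠ 0 := by exact_mod_cast hspos.ne'
  push_cast
  exact inv_alg (ζ₁ - (starRingEnd ℂ) ζ₂) ((starRingEnd ℂ) ζ₁ - (starRingEnd ℂ) ζ₂)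
    (ζ₁ - (starRingEnd ℂ) ζ₁) (herm u₂ u₁) (u₂ a) (u₁ a) ((s:ℝ):ℂ) hβ hγ hsC

end
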